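/- Let X be a non-hyperelliptic curve of genus g ≥ 3, Q = Σ a_{ij} ω_i⊗ω_j ∈ I₂(K_X), and P ∈ X with Schiffer variation ξ_P. Write ρ(Q)(ξ_P) = Ψ^Q_P(z) dz² locally at P. Then Ψ^Q_P extends holomorphically across P and Ψ^Q_P(P) = ½ Σ_{i,j} a_{ij} f_i(P) f''_j(P) = ½ μ₂(Q)(P), where μ₂ is the second Gaussian map. -/

import Mathlib

open Metric Filter Topology

/-!
STATEMENT 7: for `Q = ∑ a_{ij} ω_i ⊗ ω_j ∈ I₂(K_X)` and `P ∈ X`, writing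
`ρ(Q)(ξ_P) = Ψ^Q_P(z) dz²` in a coordinate `z` centered at `P`, the coefficient
`Ψ^Q_P` extends holomorphically across `P`, with
`Ψ^Q_P(P) = ½ ∑ a_{ij} f_i(P) f''_j(P) = ½ μ₂(Q)(P)`,
where `μ₂(Q) = ∑ a_{ij} f''_i f_j (dz)⁴` is the second Gaussian map.

Encoding: the `f_i` are the local expressions of the orthonormal basis of `H⁰(K_X)` in
the coordinate `z` centered at `P` (holomorphic on a ball), `Q ∈ I₂(K_X)` gives
`∑ a_{ij} f_i f_j ≡ 0`, and away from `0` we have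
`Ψ^Q_P(z) = -(-1/z² + g(z)) ∑_{i,j} a_{ij} f_i(0) f_j(z)` with `g` holomorphic
(the local expression of `η_P`).
-/
theorem psi_extends_and_equals_half_mu2
    (g : ℕ) (hg : 3 ≤ g) (hyperelliptic : Prop) (hnh : ¬hyperelliptic)
    (r : ℝ) (hr : 0 < r)
    -- local expressions of the orthonormal basis of H⁰(K_X) at P (coordinate centered at 0)
    (f : Fin g → ℂ → ℂ) (hf : ∀ i, DifferentiableOn ℂ (f i) (ball (0 : ℂ) r))
    -- the quadric Q = ∑ a_{ij} ω_i ⊗ ω_j ∈ I₂(K_X)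
    (a : Matrix (Fin g) (Fin g) ℂ) (ha : a.IsSymm)
    (hQ : ∀ z ∈ ball (0 : ℂ) r, ∑ i, ∑ j, a i j * f i z * f j z = 0)
    -- the holomorphic part g of the local expression (-1/z² + g(z))dz of η_P
    (gP : ℂ → ℂ) (hgP : DifferentiableOn ℂ gP (ball (0 : ℂ) r))
    -- the local coefficient Ψ^Q_P of ρ(Q)(ξ_P) = -η_P ∑ a_{ij} f_i(P) ω_j
    (Ψ : ℂ → ℂ)
    (hΨ : ∀ z ∈ ball (0 : ℂ) r, z ≠ 0 →
      Ψ z = -((-1 / z ^ 2) + gP z) * ∑ i, ∑ j, a i j * f i 0 * f j z) :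
    ∃ Ψext : ℂ → ℂ, DifferentiableOn ℂ Ψext (ball (0 : ℂ) r) ∧
      (∀ z ∈ ball (0 : ℂ) r, z ≠ 0 → Ψext z = Ψ z) ∧
      Ψext 0 = (1 / 2) * ∑ i, ∑ j, a i j * f i 0 * deriv (deriv (f j)) 0 ∧
      Ψext 0 = (1 / 2) * ∑ i, ∑ j, a i j * deriv (deriv (f i)) 0 * f j 0 := by
  have h0 : (0 : ℂ) ∈ ball (0 : ℂ) r := by simpa using hr
  have hball : ball (0 : ℂ) r ∈ 𝓝 (0 : ℂ) := isOpen_ball.mem_nhds h0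
  have hfd : ∀ i, ∀ z ∈ ball (0 : ℂ) r, DifferentiableAt ℂ (f i) z := fun i z hz =>
    (hf i).differentiableAt (isOpen_ball.mem_nhds hz)
  set c : Fin g → ℂ := fun j => ∑ i, a i j * f i 0 with hc
  set k : ℂ → ℂ := fun z => ∑ j, c j * f j z with hkdef
  have hks : ∀ z, k z = ∑ i, ∑ j, a i j * f i 0 * f j z := by
    intro z
    calc k z = ∑ j, ∑ i, a i j * f i 0 * f j z := by
          simp only [hkdef, hc, Finset.sum_mul, mul_assoc]
      _ = ∑ i, ∑ j, a i j * f i 0 * f j z := Finset.sum_comm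
  -- differentiability of k on the ball
  have hkd : DifferentiableOn ℂ k (ball (0 : ℂ) r) := by
    apply DifferentiableOn.fun_sum
    intro j _
    exact fun z hz => ((hfd j z hz).const_mul (c j)).differentiableWithinAt
  -- k 0 = 0
  have hk0 : k 0 = 0 := by rw [hks]; exact hQ 0 h0
  -- F ≡ 0 gives deriv F 0 = 0, which by symmetry gives deriv k 0 = 0
  have hsym : ∀ i j, a j i = a i j := fun i j => ha.apply i j
  have hS : ∑ i, ∑ j, a i j * f i 0 * deriv (f j) 0 = 0 := by
    have hF : HasDerivAt (fun z => ∑ i, ∑ j, a i j * f i z * f j z)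
        (∑ i, ∑ j, (a i j * deriv (f i) 0 * f j 0 + a i j * f i 0 * deriv (f j) 0)) 0 := by
      apply HasDerivAt.fun_sum
      intro i _
      apply HasDerivAt.fun_sum
      intro j _
      exact (((hfd i 0 h0).hasDerivAt.const_mul (a i j)).mul (hfd j 0 h0).hasDerivAt)
    have hF0 : (fun z => ∑ i, ∑ j, a i j * f i z * f j z) =ᶠ[𝓝 (0 : ℂ)] (fun _ => (0 : ℂ)) :=
      Filter.eventuallyEq_of_mem hball hQ
    have hder0 : deriv (fun z => ∑ i, ∑ j, a i j * f i z * f j z) 0 = 0 := by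
      rw [hF0.deriv_eq]; simp
    have h2 : (∑ i, ∑ j, (a i j * deriv (f i) 0 * f j 0 + a i j * f i 0 * deriv (f j) 0)) = 0 := by
      rw [← hF.deriv]
      exact hder0
    have hsw : ∑ i, ∑ j, a i j * deriv (f i) 0 * f j 0
        = ∑ i, ∑ j, a i j * f i 0 * deriv (f j) 0 := by
      rw [Finset.sum_comm]
      apply Finset.sum_congr rfl; intro i _
      apply Finset.sum_congr rfl; intro j _
      rw [hsym i j]; ring
    have := h2
    simp only [Finset.sum_add_distrib] at this
    rw [hsw] at this
    have h2' : (2 : ℂ) * (∑ i, ∑ j, a i j * f i 0 * deriv (f j) 0) = 0 := by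
      linear_combination this
    have := mul_eq_zero.mp h2'
    simpa using this
  have hkd0 : deriv k 0 = 0 := by
    have hk' : HasDerivAt k (∑ j, c j * deriv (f j) 0) 0 := by
      apply HasDerivAt.fun_sum
      intro j _
      exact (hfd j 0 h0).hasDerivAt.const_mul (c j)
    rw [hk'.deriv]
    calc ∑ j, c j * deriv (f j) 0 = ∑ j, ∑ i, a i j * f i 0 * deriv (f j) 0 := by
          simp only [hc, Finset.sum_mul, mul_assoc]
      _ = ∑ i, ∑ j, a i j * f i 0 * deriv (f j) 0 := Finset.sum_comm
      _ = 0 := hS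
  -- second derivative of k at 0
  have hw : True := trivial
  have hfa : ∀ j, AnalyticOnNhd ℂ (f j) (ball (0 : ℂ) r) := fun j =>
    (hf j).analyticOnNhd isOpen_ball
  have hkdd : deriv (deriv k) 0 = ∑ j, c j * deriv (deriv (f j)) 0 := by
    have hev : deriv k =ᶠ[𝓝 (0 : ℂ)] (fun z => ∑ j, c j * deriv (f j) z) := by
      apply Filter.eventuallyEq_of_mem hball
      intro z hz
      have hk' : HasDerivAt k (∑ j, c j * deriv (f j) z) z := by
        apply HasDerivAt.fun_sum
        intro j _
        exact (hfd j z hz).hasDerivAt.const_mul (c j)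
      exact hk'.deriv
    rw [hev.deriv_eq]
    have hdd : HasDerivAt (fun z => ∑ j, c j * deriv (f j) z) (∑ j, c j * deriv (deriv (f j)) 0) 0 := by
      apply HasDerivAt.fun_sum
      intro j _
      exact (((hfa j).deriv 0 h0).differentiableAt.hasDerivAt).const_mul (c j)
    exact hdd.deriv
  -- power series of k at 0
  have hka : AnalyticAt ℂ k 0 := hkd.analyticAt hball
  obtain ⟨p, hp⟩ := hka
  have hdsl : HasFPowerSeriesAt (dslope k 0) p.fslope 0 := hp.has_fpower_series_dslope_fslope
  have hqval : deriv (dslope k 0) 0 = p.coeff 2 := by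
    rw [hdsl.deriv]
    show p.fslope.coeff 1 = p.coeff 2
    exact FormalMultilinearSeries.coeff_fslope
  -- p.coeff 2 = (1/2) * deriv (deriv k) 0
  have hcoeff2 : p.coeff 2 = (1 / 2 : ℂ) * deriv (deriv k) 0 := by
    obtain ⟨R, hR⟩ := hp
    have hfac := hR.factorial_smul (1 : ℂ) 2
    have hit : iteratedFDeriv ℂ 2 k 0 (fun _ => (1 : ℂ)) = deriv (deriv k) 0 := by
      rw [← iteratedDeriv_eq_iteratedFDeriv]
      rw [show (2 : ℕ) = 1 + 1 from rfl, iteratedDeriv_succ, iteratedDeriv_one]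
    rw [hit] at hfac
    rw [show Nat.factorial 2 = 2 from rfl, two_nsmul] at hfac
    have hcc : p.coeff 2 = p 2 fun _ => (1 : ℂ) := rfl
    rw [hcc]
    linear_combination hfac / 2
  -- define the extension
  refine ⟨fun z => dslope (dslope k 0) 0 z - gP z * k z, ?_, ?_, ?_, ?_⟩
  · have hq : DifferentiableOn ℂ (dslope (dslope k 0) 0) (ball (0 : ℂ) r) :=
      (Complex.differentiableOn_dslope hball).2 ((Complex.differentiableOn_dslope hball).2 hkd)
    exact hq.sub (hgP.mul hkd)
  · intro z hz hz0
    show dslope (dslope k 0) 0 z - gP z * k z = Ψ z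
    have hd1 : dslope k 0 z = z⁻¹ * k z := by
      rw [dslope_of_ne k hz0, slope_def_field, hk0]
      field_simp
      ring
    have hd0 : dslope k 0 0 = 0 := by rw [dslope_same]; exact hkd0
    have hd2 : dslope (dslope k 0) 0 z = z⁻¹ * (z⁻¹ * k z) := by
      rw [dslope_of_ne _ hz0, slope_def_field, hd0, hd1]
      field_simp
      ring
    rw [hΨ z hz hz0, ← hks, hd2]
    field_simp
    ring
  · show dslope (dslope k 0) 0 0 - gP 0 * k 0 = _
    have hval : dslope (dslope k 0) 0 0 - gP 0 * k 0 = p.coeff 2 := by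
      rw [hk0, mul_zero, sub_zero, dslope_same, hqval]
    rw [hval, hcoeff2, hkdd]
    congr 1
    calc ∑ j, c j * deriv (deriv (f j)) 0 = ∑ j, ∑ i, a i j * f i 0 * deriv (deriv (f j)) 0 := by
          simp only [hc, Finset.sum_mul, mul_assoc]
      _ = ∑ i, ∑ j, a i j * f i 0 * deriv (deriv (f j)) 0 := Finset.sum_comm
  · show dslope (dslope k 0) 0 0 - gP 0 * k 0 = _
    have hval : dslope (dslope k 0) 0 0 - gP 0 * k 0 = p.coeff 2 := by
      rw [hk0, mul_zero, sub_zero, dslope_same, hqval]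
    rw [hval, hcoeff2, hkdd]
    congr 1
    calc ∑ j, c j * deriv (deriv (f j)) 0 = ∑ j, ∑ i, a i j * f i 0 * deriv (deriv (f j)) 0 := by
          simp only [hc, Finset.sum_mul, mul_assoc]
      _ = ∑ j, ∑ i, a j i * deriv (deriv (f j)) 0 * f i 0 := by
          apply Finset.sum_congr rfl; intro j _
          apply Finset.sum_congr rfl; intro i _
          rw [hsym i j]; ring
      _ = ∑ i, ∑ j, a i j * deriv (deriv (f i)) 0 * f j 0 := rfl
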